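/- arXiv:2502.08751 — 2 statements merged into one kernel-verified Lean document; each statement's English description precedes it below -/
import Mathlib

section
/- Suppose an operator N on a normed space satisfies: for all μ in a subspace V, ||F_*ⁿ μ||_{S¹} ≤ R r^m ||F_*^{m+d} μ||_{S¹} + (C+1)||F_*^{m+d} μ||₁ for n = 2m+d with d ∈ {0,1}, together with a uniform bound ||F_*ⁿμ||_{S¹} ≤ R + C + 1 on the unit ball of V, weak contraction ||F_* μ||₁ ≤ ||μ||₁, and convergence to equilibrium ||F_*ⁿ μ||₁ ≤ D β₁ⁿ ||μ||_{S¹} on V with 0 < β₁ < 1, 0 < r < 1. Then there exist U₁ > 0 and λ₀ = max{√β₁, √r} < 1 such that ||F_*ⁿ μ||_{S¹} ≤ λ₀ⁿ U₁ ||μ||_{S¹} for all n ≥ 1 and μ ∈ V. -/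
/-- Abstract combination step for the spectral gap: a Lasota–Yorke inequality in the strong
norm, a uniform bound on the unit ball of `V`, weak contraction, and exponential convergence
to equilibrium in the weak norm on `V` yield exponential decay in the strong norm on `V`,
with rate `λ₀ = max{√β, √r}`. -/
theorem stmt12 {X : Type*} [NormedAddCommGroup X] [NormedSpace ℝ X]
    (T : X →L[ℝ] X) (N1 : X → ℝ) (V : Submodule ℝ X)
    (R C D r β : ℝ) (hr0 : 0 < r) (hr1 : r < 1) (hβ0 : 0 < β) (hβ1 : β < 1)
    (hR : 0 ≤ R) (hC : 0 ≤ C) (hD : 0 ≤ D)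
    (hVinv : ∀ μ ∈ V, T μ ∈ V)
    (hLY : ∀ (μ : X) (m d : ℕ), d ≤ 1 →
      ‖(T ^ (2 * m + d)) μ‖ ≤ R * r ^ m * ‖(T ^ (m + d)) μ‖ + (C + 1) * N1 ((T ^ (m + d)) μ))
    (hUnif : ∀ μ ∈ V, ‖μ‖ ≤ 1 → ∀ n : ℕ, ‖(T ^ n) μ‖ ≤ R + C + 1)
    (hweak : ∀ μ : X, N1 (T μ) ≤ N1 μ)
    (hconv : ∀ μ ∈ V, ∀ n : ℕ, N1 ((T ^ n) μ) ≤ D * β ^ n * ‖μ‖) :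
    ∃ U₁ > 0, ∀ μ ∈ V, ∀ n : ℕ, 1 ≤ n →
      ‖(T ^ n) μ‖ ≤ (max (Real.sqrt β) (Real.sqrt r)) ^ n * U₁ * ‖μ‖ := by
  set lam := max (Real.sqrt β) (Real.sqrt r) with hlamdef
  have hβs : 0 < Real.sqrt β := Real.sqrt_pos.mpr hβ0
  have hlam0 : 0 < lam := lt_of_lt_of_le hβs (le_max_left _ _)
  have hlam1 : lam < 1 := by
    apply max_lt
    · rw [show (1:ℝ) = Real.sqrt 1 by simp]
      exact Real.sqrt_lt_sqrt hβ0.le hβ1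
    · rw [show (1:ℝ) = Real.sqrt 1 by simp]
      exact Real.sqrt_lt_sqrt hr0.le hr1
  have hβlam : β ≤ lam ^ 2 := by
    have h := pow_le_pow_left₀ (Real.sqrt_nonneg β) (le_max_left (Real.sqrt β) (Real.sqrt r)) 2
    rwa [Real.sq_sqrt hβ0.le] at h
  have hrlam : r ≤ lam ^ 2 := by
    have h := pow_le_pow_left₀ (Real.sqrt_nonneg r) (le_max_right (Real.sqrt β) (Real.sqrt r)) 2
    rwa [Real.sq_sqrt hr0.le] at h
  set K := R * (R + C + 1) + (C + 1) * D with hKdef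
  have hK0 : 0 ≤ K := by positivity
  refine ⟨K / lam + 1, by positivity, ?_⟩
  intro μ hμ n hn
  -- strong bound from the uniform bound by homogeneity
  have hSB : ∀ k : ℕ, ‖(T ^ k) μ‖ ≤ (R + C + 1) * ‖μ‖ := by
    intro k
    rcases eq_or_ne μ 0 with rfl | hμ0
    · simp
    · have hnz : ‖μ‖ ≠ 0 := norm_ne_zero_iff.mpr hμ0
      have h1 : ‖(‖μ‖⁻¹ • μ)‖ ≤ 1 := by
        rw [norm_smul, norm_inv, norm_norm]; field_simp; exact le_rfl
      have h2 := hUnif (‖μ‖⁻¹ • μ) (V.smul_mem _ hμ) h1 k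
      rw [map_smul, norm_smul, norm_inv, norm_norm] at h2
      calc ‖(T ^ k) μ‖ = ‖μ‖ * (‖μ‖⁻¹ * ‖(T ^ k) μ‖) := by field_simp
        _ ≤ ‖μ‖ * (R + C + 1) := mul_le_mul_of_nonneg_left h2 (norm_nonneg μ)
        _ = (R + C + 1) * ‖μ‖ := mul_comm _ _
  set m := n / 2 with hm
  set d := n % 2 with hd
  have hd1 : d ≤ 1 := Nat.lt_succ_iff.mp (Nat.mod_lt n (by norm_num))
  have hnd : 2 * m + d = n := Nat.div_add_mod n 2
  have hLY' := hLY μ m d hd1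
  rw [hnd] at hLY'
  have hS := hSB (m + d)
  have hN : N1 ((T ^ (m + d)) μ) ≤ D * β ^ (m + d) * ‖μ‖ := hconv μ hμ (m + d)
  have key : ‖(T ^ n) μ‖ ≤ (R * (R + C + 1) * r ^ m + (C + 1) * (D * β ^ (m + d))) * ‖μ‖ := by
    have h1 : R * r ^ m * ‖(T ^ (m + d)) μ‖ ≤ R * r ^ m * ((R + C + 1) * ‖μ‖) :=
      mul_le_mul_of_nonneg_left hS (by positivity)
    have h2 : (C + 1) * N1 ((T ^ (m + d)) μ) ≤ (C + 1) * (D * β ^ (m + d) * ‖μ‖) :=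
      mul_le_mul_of_nonneg_left hN (by positivity)
    calc ‖(T ^ n) μ‖ ≤ R * r ^ m * ‖(T ^ (m + d)) μ‖ + (C + 1) * N1 ((T ^ (m + d)) μ) := hLY'
      _ ≤ R * r ^ m * ((R + C + 1) * ‖μ‖) + (C + 1) * (D * β ^ (m + d) * ‖μ‖) :=
          add_le_add h1 h2
      _ = (R * (R + C + 1) * r ^ m + (C + 1) * (D * β ^ (m + d))) * ‖μ‖ := by ring
  have hpow2m : lam ^ (2 * m) ≤ lam ^ n / lam := by
    rw [le_div_iff₀ hlam0]
    have hld : lam ^ 1 ≤ lam ^ d := pow_le_pow_of_le_one hlam0.le hlam1.le hd1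
    calc lam ^ (2 * m) * lam = lam ^ (2 * m) * lam ^ 1 := by rw [pow_one]
      _ ≤ lam ^ (2 * m) * lam ^ d := mul_le_mul_of_nonneg_left hld (by positivity)
      _ = lam ^ (2 * m + d) := (pow_add lam (2 * m) d).symm
      _ = lam ^ n := by rw [hnd]
  have hrm : r ^ m ≤ lam ^ n / lam := by
    calc r ^ m ≤ (lam ^ 2) ^ m := pow_le_pow_left₀ hr0.le hrlam m
      _ = lam ^ (2 * m) := by rw [← pow_mul]
      _ ≤ lam ^ n / lam := hpow2m
  have hβm : β ^ (m + d) ≤ lam ^ n / lam := by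
    calc β ^ (m + d) ≤ β ^ m := pow_le_pow_of_le_one hβ0.le hβ1.le (Nat.le_add_right m d)
      _ ≤ (lam ^ 2) ^ m := pow_le_pow_left₀ hβ0.le hβlam m
      _ = lam ^ (2 * m) := by rw [← pow_mul]
      _ ≤ lam ^ n / lam := hpow2m
  have hfinal : (R * (R + C + 1) * r ^ m + (C + 1) * (D * β ^ (m + d))) * ‖μ‖
      ≤ lam ^ n * (K / lam + 1) * ‖μ‖ := by
    apply mul_le_mul_of_nonneg_right _ (norm_nonneg μ)
    have hlp : 0 ≤ lam ^ n := by positivity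
    have h1 : R * (R + C + 1) * r ^ m ≤ R * (R + C + 1) * (lam ^ n / lam) :=
      mul_le_mul_of_nonneg_left hrm (by positivity)
    have h2 : (C + 1) * (D * β ^ (m + d)) ≤ (C + 1) * (D * (lam ^ n / lam)) := by
      apply mul_le_mul_of_nonneg_left _ (by positivity)
      exact mul_le_mul_of_nonneg_left hβm hD
    calc R * (R + C + 1) * r ^ m + (C + 1) * (D * β ^ (m + d))
        ≤ R * (R + C + 1) * (lam ^ n / lam) + (C + 1) * (D * (lam ^ n / lam)) :=
          add_le_add h1 h2
      _ = lam ^ n * (K / lam) := by field_simp; ring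
      _ ≤ lam ^ n * (K / lam + 1) := by nlinarith [hlp]
  exact key.trans hfinal
end

section
/- Let K be a compact metric space of diameter 1, μ₁, μ₂ finite positive measures on K and F₁, F₂ : K → K maps such that F₁ is an α-contraction and d(F₁(z), F₂(z)) ≤ δ for all z. Then for the Wasserstein-like norm, ||F₁_* μ − F₂_* μ||_W ≤ δ ||μ||_W for any positive measure μ, and consequently ||F₁_* μ₁ − F₂_* μ₂||_W ≤ α ||μ₁ − μ₂||_W + δ ||μ₂||_W when (μ₁ − μ₂)(K) = 0. -/
open MeasureTheory

set_option linter.unusedSectionVars false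

/-- Wasserstein–Kantorovich-like norm of a positive measure. -/
noncomputable def mWnorm {K : Type*} [MeasurableSpace K] [MetricSpace K]
    (μ : MeasureTheory.Measure K) : ℝ :=
  sSup {r | ∃ h : K → ℝ, (∀ x y, |h x - h y| ≤ dist x y) ∧ (∀ x, |h x| ≤ 1) ∧
    r = |∫ x, h x ∂μ|}

/-- Wasserstein–Kantorovich-like distance between two positive measures, i.e. the `W`-norm of
their difference as signed measures. -/
noncomputable def Wdist {K : Type*} [MeasurableSpace K] [MetricSpace K]
    (μ ν : MeasureTheory.Measure K) : ℝ :=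
  sSup {r | ∃ h : K → ℝ, (∀ x y, |h x - h y| ≤ dist x y) ∧ (∀ x, |h x| ≤ 1) ∧
    r = |(∫ x, h x ∂μ) - ∫ x, h x ∂ν|}

section Aux
variable {K : Type*} [MetricSpace K] [MeasurableSpace K] [BorelSpace K]

lemma lip_cont {h : K → ℝ} (hl : ∀ x y, |h x - h y| ≤ dist x y) : Continuous h := by
  have : LipschitzWith 1 h := LipschitzWith.of_dist_le_mul (fun x y => by
    rw [Real.dist_eq]; simpa using hl x y)
  exact this.continuous

lemma integrable_of_bdd (μ : Measure K) [IsFiniteMeasure μ] {f : K → ℝ}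
    (hm : AEStronglyMeasurable f μ) (hb : ∀ x, |f x| ≤ 1) : Integrable f μ :=
  Integrable.mono' (integrable_const 1) hm
    (Filter.Eventually.of_forall fun x => by simpa using hb x)

lemma abs_integral_bdd (μ : Measure K) [IsFiniteMeasure μ] {f : K → ℝ}
    (hm : AEStronglyMeasurable f μ) (hb : ∀ x, |f x| ≤ 1) :
    |∫ x, f x ∂μ| ≤ (μ Set.univ).toReal := by
  calc |∫ x, f x ∂μ| ≤ ∫ x, |f x| ∂μ := by
        simpa using norm_integral_le_integral_norm f (μ := μ)
    _ ≤ ∫ _x, (1:ℝ) ∂μ := integral_mono ((integrable_of_bdd μ hm hb).abs)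
        (integrable_const 1) hb
    _ = (μ Set.univ).toReal := by simp [Measure.real]

lemma mWnorm_bddAbove (μ : Measure K) [IsFiniteMeasure μ] :
    BddAbove {r | ∃ h : K → ℝ, (∀ x y, |h x - h y| ≤ dist x y) ∧ (∀ x, |h x| ≤ 1) ∧
      r = |∫ x, h x ∂μ|} := by
  refine ⟨(μ Set.univ).toReal, ?_⟩
  rintro r ⟨h, hl, hb, rfl⟩
  exact abs_integral_bdd μ (lip_cont hl).aestronglyMeasurable hb

lemma measure_le_mWnorm (μ : Measure K) [IsFiniteMeasure μ] :
    (μ Set.univ).toReal ≤ mWnorm μ := by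
  apply le_csSup (mWnorm_bddAbove μ)
  exact ⟨fun _ => 1, by simp [dist_nonneg], by simp, by simp [Measure.real]⟩

lemma mWnorm_nonneg (μ : Measure K) [IsFiniteMeasure μ] : 0 ≤ mWnorm μ :=
  le_trans (by positivity) (measure_le_mWnorm μ)

lemma Wdist_bddAbove (μ ν : Measure K) [IsFiniteMeasure μ] [IsFiniteMeasure ν] :
    BddAbove {r | ∃ h : K → ℝ, (∀ x y, |h x - h y| ≤ dist x y) ∧ (∀ x, |h x| ≤ 1) ∧
      r = |(∫ x, h x ∂μ) - ∫ x, h x ∂ν|} := by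
  refine ⟨(μ Set.univ).toReal + (ν Set.univ).toReal, ?_⟩
  rintro r ⟨h, hl, hb, rfl⟩
  have h1 := abs_integral_bdd μ (lip_cont hl).aestronglyMeasurable hb
  have h2 := abs_integral_bdd ν (lip_cont hl).aestronglyMeasurable hb
  calc |(∫ x, h x ∂μ) - ∫ x, h x ∂ν| ≤ |∫ x, h x ∂μ| + |∫ x, h x ∂ν| := abs_sub _ _
    _ ≤ _ := add_le_add h1 h2

/-- Key estimate: if `d(F₁ z, F₂ z) ≤ δ`, then the integrals of a 1-Lipschitz function against
the two pushforwards differ by at most `δ μ(K)`. -/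
lemma close_bound (μ : Measure K) [IsFiniteMeasure μ] {F₁ F₂ : K → K}
    (hF₁m : Measurable F₁) (hF₂m : Measurable F₂) {δ : ℝ}
    (hclose : ∀ z, dist (F₁ z) (F₂ z) ≤ δ)
    {h : K → ℝ} (hl : ∀ x y, |h x - h y| ≤ dist x y) (hb : ∀ x, |h x| ≤ 1) :
    |(∫ x, h (F₁ x) ∂μ) - ∫ x, h (F₂ x) ∂μ| ≤ δ * (μ Set.univ).toReal := by
  have hc := lip_cont hl
  have hi1 : Integrable (fun x => h (F₁ x)) μ :=
    integrable_of_bdd μ (hc.measurable.comp hF₁m).aestronglyMeasurable fun x => hb _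
  have hi2 : Integrable (fun x => h (F₂ x)) μ :=
    integrable_of_bdd μ (hc.measurable.comp hF₂m).aestronglyMeasurable fun x => hb _
  rw [← integral_sub hi1 hi2]
  calc |∫ x, (h (F₁ x) - h (F₂ x)) ∂μ| ≤ ∫ x, |h (F₁ x) - h (F₂ x)| ∂μ := by
        simpa using norm_integral_le_integral_norm (fun x => h (F₁ x) - h (F₂ x)) (μ := μ)
    _ ≤ ∫ _x, δ ∂μ := by
        refine integral_mono (hi1.sub hi2).abs (integrable_const δ) fun x => ?_
        exact le_trans (hl _ _) (hclose x)
    _ = δ * (μ Set.univ).toReal := by simp [mul_comm, Measure.real]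

end Aux

/-- If `F₁` is an `α`-contraction and `d(F₁ z, F₂ z) ≤ δ` for all `z`, then
`‖F₁_* μ − F₂_* μ‖_W ≤ δ ‖μ‖_W` for any positive measure `μ`, and consequently
`‖F₁_* μ₁ − F₂_* μ₂‖_W ≤ α ‖μ₁ − μ₂‖_W + δ ‖μ₂‖_W` whenever `(μ₁ − μ₂)(K) = 0`. -/
theorem stmt17 {K : Type*} [MetricSpace K] [CompactSpace K] [MeasurableSpace K] [BorelSpace K]
    (hdiam : Metric.diam (Set.univ : Set K) = 1)
    (α δ : ℝ) (hα0 : 0 ≤ α) (hα1 : α < 1) (hδ : 0 ≤ δ)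
    (F₁ F₂ : K → K) (hF₁m : Measurable F₁) (hF₂m : Measurable F₂)
    (hF₁ : ∀ x y, dist (F₁ x) (F₁ y) ≤ α * dist x y)
    (hclose : ∀ z, dist (F₁ z) (F₂ z) ≤ δ)
    (μ₁ μ₂ : MeasureTheory.Measure K) [IsFiniteMeasure μ₁] [IsFiniteMeasure μ₂] :
    (∀ μ : MeasureTheory.Measure K, IsFiniteMeasure μ →
      Wdist (μ.map F₁) (μ.map F₂) ≤ δ * mWnorm μ) ∧
    (μ₁ Set.univ = μ₂ Set.univ →
      Wdist (μ₁.map F₁) (μ₂.map F₂) ≤ α * Wdist μ₁ μ₂ + δ * mWnorm μ₂) := by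
  have hne : Nonempty K := by
    rcases isEmpty_or_nonempty K with hK | hK
    · rw [Set.univ_eq_empty_iff.mpr hK, Metric.diam_empty] at hdiam; norm_num at hdiam
    · exact hK
  obtain ⟨z₀⟩ := hne
  constructor
  · intro μ hμfin
    apply Real.sSup_le
    · rintro r ⟨h, hl, hb, rfl⟩
      have hc := lip_cont hl
      rw [integral_map hF₁m.aemeasurable hc.aestronglyMeasurable,
        integral_map hF₂m.aemeasurable hc.aestronglyMeasurable]
      calc |(∫ x, h (F₁ x) ∂μ) - ∫ x, h (F₂ x) ∂μ| ≤ δ * (μ Set.univ).toReal :=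
            close_bound μ hF₁m hF₂m hclose hl hb
        _ ≤ δ * mWnorm μ := mul_le_mul_of_nonneg_left (measure_le_mWnorm μ) hδ
    · exact mul_nonneg hδ (mWnorm_nonneg μ)
  · intro heq
    apply Real.sSup_le
    · rintro r ⟨h, hl, hb, rfl⟩
      have hc := lip_cont hl
      rw [integral_map hF₁m.aemeasurable hc.aestronglyMeasurable,
        integral_map hF₂m.aemeasurable hc.aestronglyMeasurable]
      have key : |(∫ x, h (F₁ x) ∂μ₁) - ∫ x, h (F₁ x) ∂μ₂| ≤ α * Wdist μ₁ μ₂ := by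
        rcases eq_or_lt_of_le hα0 with hα | hα
        · -- α = 0 : F₁ is constant and the total masses agree
          have hconst : ∀ z, F₁ z = F₁ z₀ := fun z =>
            dist_le_zero.mp (le_trans (hF₁ z z₀) (by rw [← hα]; simp))
          have : ∀ z, h (F₁ z) = h (F₁ z₀) := fun z => by rw [hconst z]
          simp only [this, integral_const, smul_eq_mul, heq]
          simp [← hα, Measure.real, heq]
        · -- α > 0 : rescale
          set c := h (F₁ z₀) with hc0
          set g : K → ℝ := fun z => (h (F₁ z) - c) / α with hg
          have hgl : ∀ x y, |g x - g y| ≤ dist x y := by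
            intro x y
            have : |g x - g y| = |h (F₁ x) - h (F₁ y)| / α := by
              rw [hg]; rw [div_sub_div_same, abs_div, abs_of_pos hα]; ring_nf
            rw [this, div_le_iff₀ hα, mul_comm]
            exact le_trans (hl _ _) (hF₁ x y)
          have hgb : ∀ x, |g x| ≤ 1 := by
            intro x
            have h1 : |h (F₁ x) - c| ≤ α * dist x z₀ := le_trans (hl _ _) (hF₁ x z₀)
            have h2 : dist x z₀ ≤ 1 := by
              rw [← hdiam]
              exact Metric.dist_le_diam_of_mem (IsCompact.isBounded isCompact_univ)
                (Set.mem_univ x) (Set.mem_univ z₀)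
            have : |g x| = |h (F₁ x) - c| / α := by rw [hg, abs_div, abs_of_pos hα]
            rw [this, div_le_one hα]
            calc |h (F₁ x) - c| ≤ α * dist x z₀ := h1
              _ ≤ α * 1 := mul_le_mul_of_nonneg_left h2 hα0
              _ = α := mul_one α
          have hgi : ∀ (ν : Measure K) [IsFiniteMeasure ν],
              ∫ x, h (F₁ x) ∂ν = α * (∫ x, g x ∂ν) + c * (ν Set.univ).toReal := by
            intro ν hν
            have hig : Integrable g ν := integrable_of_bdd ν
              ((lip_cont hgl).aestronglyMeasurable) hgb
            have : ∀ x, h (F₁ x) = α * g x + c := fun x => by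
              rw [hg]; field_simp; ring
            rw [integral_congr_ae (Filter.Eventually.of_forall this),
              integral_add ((hig.const_mul α)) (integrable_const c)]
            simp [integral_const, mul_comm, integral_const_mul, Measure.real]
          rw [hgi μ₁, hgi μ₂, heq]
          have : α * (∫ x, g x ∂μ₁) + c * (μ₂ Set.univ).toReal -
              (α * (∫ x, g x ∂μ₂) + c * (μ₂ Set.univ).toReal) =
              α * ((∫ x, g x ∂μ₁) - ∫ x, g x ∂μ₂) := by ring
          rw [this, abs_mul, abs_of_nonneg hα0]
          refine mul_le_mul_of_nonneg_left ?_ hα0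
          exact le_csSup (Wdist_bddAbove μ₁ μ₂) ⟨g, hgl, hgb, rfl⟩
      calc |(∫ x, h (F₁ x) ∂μ₁) - ∫ x, h (F₂ x) ∂μ₂|
          ≤ |(∫ x, h (F₁ x) ∂μ₁) - ∫ x, h (F₁ x) ∂μ₂| +
            |(∫ x, h (F₁ x) ∂μ₂) - ∫ x, h (F₂ x) ∂μ₂| := abs_sub_le _ _ _
        _ ≤ α * Wdist μ₁ μ₂ + δ * mWnorm μ₂ := add_le_add key
            (le_trans (close_bound μ₂ hF₁m hF₂m hclose hl hb)
              (mul_le_mul_of_nonneg_left (measure_le_mWnorm μ₂) hδ))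
    · have h1 : 0 ≤ α * Wdist μ₁ μ₂ := by
        refine mul_nonneg hα0 ?_
        refine le_csSup (Wdist_bddAbove μ₁ μ₂) ⟨fun _ => 0, by simp [dist_nonneg], by simp, by simp⟩
      have h2 : 0 ≤ δ * mWnorm μ₂ := mul_nonneg hδ (mWnorm_nonneg μ₂)
      linarith
end
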